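/- Let a(i,l,n) be the number of independent sets of size l in the path graph on {1,...,n} containing vertex i, and let i ≤ ⌈n/2⌉ - 1. Then a(i,l,n) = a(i+1,l,n) for l ≤ i; a(i,l,n) > a(i+1,l,n) for odd i and i < l ≤ ⌈n/2⌉; and a(i,l,n) < a(i+1,l,n) for even i and i < l ≤ ⌈n/2⌉. -/

import Mathlib

/-- `a i l n` is the number of independent sets of size `l` in the path graph
on `{1,…,n}` (no two consecutive integers) that contain vertex `i`. -/
def a (i l n : ℕ) : ℕ :=
  ((Finset.Icc 1 n).powerset.filter
    (fun S => S.card = l ∧ i ∈ S ∧ ∀ x ∈ S, x + 1 ∉ S)).card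

lemma a_zero_left (l n : ℕ) : a 0 l n = 0 := by
  simp only [a, Finset.card_eq_zero, Finset.filter_eq_empty_iff]
  rintro S hS ⟨-, h0, -⟩
  have := Finset.mem_Icc.mp (Finset.mem_powerset.mp hS h0)
  omega

lemma a_zero_l (i n : ℕ) : a i 0 n = 0 := by
  simp only [a, Finset.card_eq_zero, Finset.filter_eq_empty_iff]
  rintro S hS ⟨hc, h0, -⟩
  subst hc
  simp at h0

lemma a_high (i l n : ℕ) (h : n < i) : a i l n = 0 := by
  simp only [a, Finset.card_eq_zero, Finset.filter_eq_empty_iff]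
  rintro S hS ⟨-, h0, -⟩
  have := Finset.mem_Icc.mp (Finset.mem_powerset.mp hS h0)
  omega

lemma a_pos (l n : ℕ) (hl : 1 ≤ l) (hn : 2 * l ≤ n + 1) : 0 < a 1 l n := by
  rw [a, Finset.card_pos]
  refine ⟨(Finset.range l).image (fun k => 2 * k + 1), ?_⟩
  have hinj : Function.Injective (fun k : ℕ => 2 * k + 1) := by
    intro x y h
    simp only at h
    omega
  simp only [Finset.mem_filter, Finset.mem_powerset]
  refine ⟨?_, ?_, ?_, ?_⟩
  · intro x hx
    simp only [Finset.mem_image, Finset.mem_range] at hx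
    obtain ⟨k, hk, rfl⟩ := hx
    rw [Finset.mem_Icc]
    omega
  · rw [Finset.card_image_of_injective _ hinj, Finset.card_range]
  · simp only [Finset.mem_image, Finset.mem_range]
    exact ⟨0, by omega, by ring⟩
  · intro x hx hx1
    simp only [Finset.mem_image, Finset.mem_range] at hx hx1
    obtain ⟨k, -, rfl⟩ := hx
    obtain ⟨k', -, h⟩ := hx1
    omega

lemma swap (i l n : ℕ) (hi : 1 ≤ i) (hn : i + 1 ≤ n) :
    ((Finset.Icc 1 n).powerset.filter
      (fun S => (S.card = l ∧ i ∈ S ∧ ∀ x ∈ S, x + 1 ∉ S) ∧ ¬ i + 2 ∈ S)).card =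
    ((Finset.Icc 1 n).powerset.filter
      (fun S => (S.card = l ∧ i + 1 ∈ S ∧ ∀ x ∈ S, x + 1 ∉ S) ∧ ¬ i - 1 ∈ S)).card := by
  apply Finset.card_nbij' (fun S => insert (i + 1) (S.erase i))
    (fun S => insert i (S.erase (i + 1)))
  · intro S hS
    simp only [Finset.mem_coe, Finset.mem_filter, Finset.mem_powerset] at hS ⊢
    obtain ⟨hsub, ⟨hcard, hiS, hind⟩, hno⟩ := hS
    have hi1 : i + 1 ∉ S := hind i hiS
    refine ⟨?_, ⟨?_, ?_, ?_⟩, ?_⟩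
    · intro x hx
      rcases Finset.mem_insert.mp hx with rfl | hx
      · exact Finset.mem_Icc.mpr ⟨by omega, by omega⟩
      · exact hsub (Finset.mem_of_mem_erase hx)
    · rw [Finset.card_insert_of_notMem (fun h => hi1 (Finset.mem_of_mem_erase h)),
        Finset.card_erase_of_mem hiS]
      have : 1 ≤ S.card := Finset.card_pos.mpr ⟨i, hiS⟩
      omega
    · exact Finset.mem_insert_self _ _
    · intro x hx hx1
      rcases Finset.mem_insert.mp hx with rfl | hx
      · rcases Finset.mem_insert.mp hx1 with h | h
        · omega
        · exact hno (Finset.mem_of_mem_erase h)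
      · obtain ⟨hxne, hxS⟩ := Finset.mem_erase.mp hx
        rcases Finset.mem_insert.mp hx1 with h | h
        · omega
        · exact hind x hxS (Finset.mem_of_mem_erase h)
    · intro h
      rcases Finset.mem_insert.mp h with h | h
      · omega
      · have hmem := Finset.mem_of_mem_erase h
        have := hind (i - 1) hmem
        rw [show i - 1 + 1 = i from by omega] at this
        exact this hiS
  · intro T hT
    simp only [Finset.mem_coe, Finset.mem_filter, Finset.mem_powerset] at hT ⊢
    obtain ⟨hsub, ⟨hcard, hT1, hind⟩, hno⟩ := hT
    have hiT : i ∉ T := fun h => hind i h hT1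
    refine ⟨?_, ⟨?_, ?_, ?_⟩, ?_⟩
    · intro x hx
      rcases Finset.mem_insert.mp hx with rfl | hx
      · exact Finset.mem_Icc.mpr ⟨by omega, by omega⟩
      · exact hsub (Finset.mem_of_mem_erase hx)
    · rw [Finset.card_insert_of_notMem (fun h => hiT (Finset.mem_of_mem_erase h)),
        Finset.card_erase_of_mem hT1]
      have : 1 ≤ T.card := Finset.card_pos.mpr ⟨i + 1, hT1⟩
      omega
    · exact Finset.mem_insert_self _ _
    · intro x hx hx1
      rcases Finset.mem_insert.mp hx with rfl | hx
      · rcases Finset.mem_insert.mp hx1 with h | h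
        · omega
        · obtain ⟨h1, h2⟩ := Finset.mem_erase.mp h
          omega
      · obtain ⟨hxne, hxT⟩ := Finset.mem_erase.mp hx
        rcases Finset.mem_insert.mp hx1 with h | h
        · exact hno (by rw [show i - 1 = x from by omega]; exact hxT)
        · exact hind x hxT (Finset.mem_of_mem_erase h)
    · intro h
      rcases Finset.mem_insert.mp h with h | h
      · omega
      · exact hind (i + 1) hT1 (Finset.mem_of_mem_erase h)
  · intro S hS
    simp only [Finset.mem_coe, Finset.mem_filter, Finset.mem_powerset] at hS
    obtain ⟨hsub, ⟨hcard, hiS, hind⟩, hno⟩ := hS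
    have hi1 : i + 1 ∉ S.erase i := fun h => hind i hiS (Finset.mem_of_mem_erase h)
    dsimp only
    rw [Finset.erase_insert hi1, Finset.insert_erase hiS]
  · intro T hT
    simp only [Finset.mem_coe, Finset.mem_filter, Finset.mem_powerset] at hT
    obtain ⟨hsub, ⟨hcard, hT1, hind⟩, hno⟩ := hT
    have hiT : i ∉ T.erase (i + 1) := fun h => hind i (Finset.mem_of_mem_erase h) hT1
    dsimp only
    rw [Finset.erase_insert hiT, Finset.insert_erase hT1]

lemma shift (j l n : ℕ) (hj : 1 ≤ j) (hn : j + 2 ≤ n) (hl : 1 ≤ l) :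
    ((Finset.Icc 1 n).powerset.filter
      (fun S => (S.card = l ∧ j ∈ S ∧ ∀ x ∈ S, x + 1 ∉ S) ∧ j + 2 ∈ S)).card =
    a j (l - 1) (n - 2) := by
  rw [a]
  apply Finset.card_nbij'
    (fun S => (S.erase (j + 2)).image (fun x => if j + 2 < x then x - 2 else x))
    (fun T => insert (j + 2) (T.image (fun x => if j < x then x + 2 else x)))
  · intro S hS
    simp only [Finset.mem_coe, Finset.mem_filter, Finset.mem_powerset] at hS ⊢
    obtain ⟨hsub, ⟨hcard, hjS, hind⟩, hj2S⟩ := hS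
    have hbound : ∀ x ∈ S, 1 ≤ x ∧ x ≤ n := fun x hx => Finset.mem_Icc.mp (hsub hx)
    have hstruct : ∀ x ∈ S, x ≤ j ∨ x = j + 2 ∨ j + 4 ≤ x := by
      intro x hx
      by_contra hcon
      push_neg at hcon
      have h1 : x = j + 1 ∨ x = j + 3 := by omega
      rcases h1 with rfl | rfl
      · exact hind j hjS hx
      · exact hind (j + 2) hj2S hx
    have hinj : Set.InjOn (fun x => if j + 2 < x then x - 2 else x) (S.erase (j + 2)) := by
      intro x hx y hy hxy
      have hx' := hstruct x (Finset.mem_of_mem_erase (Finset.mem_coe.mp hx))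
      have hy' := hstruct y (Finset.mem_of_mem_erase (Finset.mem_coe.mp hy))
      have hxne := (Finset.mem_erase.mp (Finset.mem_coe.mp hx)).1
      have hyne := (Finset.mem_erase.mp (Finset.mem_coe.mp hy)).1
      simp only at hxy
      split_ifs at hxy <;> omega
    refine ⟨?_, ?_, ?_, ?_⟩
    · intro y hy
      simp only [Finset.mem_image, Finset.mem_erase] at hy
      obtain ⟨x, ⟨hxne, hxS⟩, rfl⟩ := hy
      have h1 := hbound x hxS
      have h2 := hstruct x hxS
      rw [Finset.mem_Icc]
      split_ifs <;> omega
    · rw [Finset.card_image_of_injOn hinj, Finset.card_erase_of_mem hj2S, hcard]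
    · simp only [Finset.mem_image, Finset.mem_erase]
      exact ⟨j, ⟨by omega, hjS⟩, by rw [if_neg (by omega)]⟩
    · intro y hy hy1
      simp only [Finset.mem_image, Finset.mem_erase] at hy hy1
      obtain ⟨x, ⟨hxne, hxS⟩, hfx⟩ := hy
      obtain ⟨x', ⟨hxne', hxS'⟩, hfx'⟩ := hy1
      have hsx := hstruct x hxS
      have hsx' := hstruct x' hxS'
      have hxx : x' = x + 1 := by split_ifs at hfx hfx' <;> omega
      exact hind x hxS (hxx ▸ hxS')
  · intro T hT
    simp only [Finset.mem_coe, Finset.mem_filter, Finset.mem_powerset] at hT ⊢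
    obtain ⟨hsub, hcard, hjT, hind⟩ := hT
    have hbound : ∀ x ∈ T, 1 ≤ x ∧ x ≤ n - 2 := fun x hx => Finset.mem_Icc.mp (hsub hx)
    have hstruct : ∀ x ∈ T, x ≤ j ∨ j + 2 ≤ x := by
      intro x hx
      by_contra hcon
      push_neg at hcon
      have : x = j + 1 := by omega
      subst this
      exact hind j hjT hx
    have hnotim : j + 2 ∉ T.image (fun x => if j < x then x + 2 else x) := by
      simp only [Finset.mem_image]
      rintro ⟨x, hx, hfx⟩
      have := hstruct x hx
      split_ifs at hfx <;> omega
    refine ⟨?_, ⟨?_, ?_, ?_⟩, ?_⟩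
    · intro y hy
      rcases Finset.mem_insert.mp hy with rfl | hy
      · rw [Finset.mem_Icc]; omega
      · simp only [Finset.mem_image] at hy
        obtain ⟨x, hx, rfl⟩ := hy
        have := hbound x hx
        rw [Finset.mem_Icc]
        split_ifs <;> omega
    · rw [Finset.card_insert_of_notMem hnotim, Finset.card_image_of_injOn, hcard]
      · omega
      · intro x hx y hy hxy
        have := hstruct x (Finset.mem_coe.mp hx)
        have := hstruct y (Finset.mem_coe.mp hy)
        simp only at hxy
        split_ifs at hxy <;> omega
    · apply Finset.mem_insert_of_mem
      simp only [Finset.mem_image]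
      exact ⟨j, hjT, by rw [if_neg (by omega)]⟩
    · intro y hy hy1
      rcases Finset.mem_insert.mp hy with rfl | hy
      · rcases Finset.mem_insert.mp hy1 with h | h
        · omega
        · simp only [Finset.mem_image] at h
          obtain ⟨x, hx, hfx⟩ := h
          have := hstruct x hx
          split_ifs at hfx <;> omega
      · simp only [Finset.mem_image] at hy
        obtain ⟨x, hx, rfl⟩ := hy
        have hsx := hstruct x hx
        rcases Finset.mem_insert.mp hy1 with h | h
        · split_ifs at h <;> omega
        · simp only [Finset.mem_image] at h
          obtain ⟨x', hx', hfx'⟩ := h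
          have hsx' := hstruct x' hx'
          split_ifs at hfx' <;>
            first
            | omega
            | (have hxx : x' = x + 1 := by omega
               exact hind x hx (hxx ▸ hx'))
    · exact Finset.mem_insert_self _ _
  · intro S hS
    simp only [Finset.mem_coe, Finset.mem_filter, Finset.mem_powerset] at hS
    obtain ⟨hsub, ⟨hcard, hjS, hind⟩, hj2S⟩ := hS
    have hstruct : ∀ x ∈ S, x ≤ j ∨ x = j + 2 ∨ j + 4 ≤ x := by
      intro x hx
      by_contra hcon
      push_neg at hcon
      have h1 : x = j + 1 ∨ x = j + 3 := by omega
      rcases h1 with rfl | rfl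
      · exact hind j hjS hx
      · exact hind (j + 2) hj2S hx
    have heq : Set.EqOn ((fun x => if j < x then x + 2 else x) ∘
        (fun x => if j + 2 < x then x - 2 else x)) id ((S.erase (j + 2) : Finset ℕ) : Set ℕ) := by
      intro x hx
      have hxe := Finset.mem_erase.mp (Finset.mem_coe.mp hx)
      have := hstruct x hxe.2
      simp only [Function.comp_apply, id_eq]
      split_ifs <;> omega
    dsimp only
    rw [Finset.image_image, Finset.image_congr heq, Finset.image_id,
      Finset.insert_erase hj2S]
  · intro T hT
    simp only [Finset.mem_coe, Finset.mem_filter, Finset.mem_powerset] at hT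
    obtain ⟨hsub, hcard, hjT, hind⟩ := hT
    have hstruct : ∀ x ∈ T, x ≤ j ∨ j + 2 ≤ x := by
      intro x hx
      by_contra hcon
      push_neg at hcon
      have : x = j + 1 := by omega
      subst this
      exact hind j hjT hx
    have hnotim : j + 2 ∉ T.image (fun x => if j < x then x + 2 else x) := by
      simp only [Finset.mem_image]
      rintro ⟨x, hx, hfx⟩
      have := hstruct x hx
      split_ifs at hfx <;> omega
    have heq : Set.EqOn ((fun x => if j + 2 < x then x - 2 else x) ∘
        (fun x => if j < x then x + 2 else x)) id ((T : Finset ℕ) : Set ℕ) := by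
      intro x hx
      have := hstruct x (Finset.mem_coe.mp hx)
      simp only [Function.comp_apply, id_eq]
      split_ifs <;> omega
    dsimp only
    rw [Finset.erase_insert hnotim, Finset.image_image, Finset.image_congr heq,
      Finset.image_id]

lemma key (i l n : ℕ) (hi : 1 ≤ i) (hn : i + 1 ≤ n) (hl : 1 ≤ l) :
    a i l n + a (i - 1) (l - 1) (n - 2) = a (i + 1) l n + a i (l - 1) (n - 2) := by
  have h1 := Finset.card_filter_add_card_filter_not
    (s := (Finset.Icc 1 n).powerset.filter
      (fun S => S.card = l ∧ i ∈ S ∧ ∀ x ∈ S, x + 1 ∉ S))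
    (p := fun S => i + 2 ∈ S)
  have h2 := Finset.card_filter_add_card_filter_not
    (s := (Finset.Icc 1 n).powerset.filter
      (fun S => S.card = l ∧ i + 1 ∈ S ∧ ∀ x ∈ S, x + 1 ∉ S))
    (p := fun S => i - 1 ∈ S)
  rw [Finset.filter_filter, Finset.filter_filter] at h1 h2
  have ha1 : ((Finset.Icc 1 n).powerset.filter
      (fun S => S.card = l ∧ i ∈ S ∧ ∀ x ∈ S, x + 1 ∉ S)).card = a i l n := rfl
  have ha2 : ((Finset.Icc 1 n).powerset.filter
      (fun S => S.card = l ∧ i + 1 ∈ S ∧ ∀ x ∈ S, x + 1 ∉ S)).card = a (i + 1) l n := rfl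
  rw [ha1] at h1
  rw [ha2] at h2
  have hswap := swap i l n hi hn
  -- the (i+2 ∈ S) piece of h1 equals a i (l-1) (n-2)
  have hin : ((Finset.Icc 1 n).powerset.filter
      (fun S => (S.card = l ∧ i ∈ S ∧ ∀ x ∈ S, x + 1 ∉ S) ∧ i + 2 ∈ S)).card
      = a i (l - 1) (n - 2) := by
    by_cases hc : i + 2 ≤ n
    · exact shift i l n hi hc hl
    · rw [a_high i (l - 1) (n - 2) (by omega), Finset.card_eq_zero,
        Finset.filter_eq_empty_iff]
      rintro S hS ⟨-, hmem⟩
      have := Finset.mem_Icc.mp (Finset.mem_powerset.mp hS hmem)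
      omega
  -- the (i-1 ∈ S) piece of h2 equals a (i-1) (l-1) (n-2)
  have hin2 : ((Finset.Icc 1 n).powerset.filter
      (fun S => (S.card = l ∧ i + 1 ∈ S ∧ ∀ x ∈ S, x + 1 ∉ S) ∧ i - 1 ∈ S)).card
      = a (i - 1) (l - 1) (n - 2) := by
    rcases Nat.lt_or_ge i 2 with hc | hc
    · have hi1 : i = 1 := by omega
      subst hi1
      rw [show (1 : ℕ) - 1 = 0 from rfl, a_zero_left, Finset.card_eq_zero,
        Finset.filter_eq_empty_iff]
      rintro S hS ⟨-, hmem⟩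
      have := Finset.mem_Icc.mp (Finset.mem_powerset.mp hS hmem)
      omega
    · have hcongr : ((Finset.Icc 1 n).powerset.filter
          (fun S => (S.card = l ∧ i + 1 ∈ S ∧ ∀ x ∈ S, x + 1 ∉ S) ∧ i - 1 ∈ S))
          = ((Finset.Icc 1 n).powerset.filter
          (fun S => (S.card = l ∧ i - 1 ∈ S ∧ ∀ x ∈ S, x + 1 ∉ S) ∧ i - 1 + 2 ∈ S)) := by
        apply Finset.filter_congr
        intro S _
        rw [show i - 1 + 2 = i + 1 from by omega]
        tauto
      rw [hcongr]
      exact shift (i - 1) l n (by omega) (by omega) hl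
  omega

lemma part1 : ∀ l i n : ℕ, l ≤ i → 2 * i + 1 ≤ n → a i l n = a (i + 1) l n := by
  intro l
  induction l with
  | zero => intro i n _ _; rw [a_zero_l, a_zero_l]
  | succ m ih =>
    intro i n hli hn
    have hkey := key i (m + 1) n (by omega) (by omega) (by omega)
    simp only [Nat.add_sub_cancel] at hkey
    have hih := ih (i - 1) (n - 2) (by omega) (by omega)
    rw [show i - 1 + 1 = i from by omega] at hih
    omega

lemma part2 : ∀ i n l : ℕ, 2 * i + 1 ≤ n → i < l → 2 * l ≤ n + 1 →
    (Even i → a i l n < a (i + 1) l n) ∧ (Odd i → a (i + 1) l n < a i l n) := by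
  intro i
  induction i with
  | zero =>
    intro n l h1 h2 h3
    constructor
    · intro _
      rw [a_zero_left]
      exact a_pos l n (by omega) (by omega)
    · intro h
      simp [Nat.odd_iff] at h
  | succ m ih =>
    intro n l h1 h2 h3
    have hkey := key (m + 1) l n (by omega) (by omega) (by omega)
    simp only [Nat.add_sub_cancel] at hkey
    have hih := ih (n - 2) (l - 1) (by omega) (by omega) (by omega)
    constructor
    · intro he
      have ho : Odd m := by
        rw [Nat.odd_iff]
        rw [Nat.even_iff] at he
        omega
      have := hih.2 ho
      omega
    · intro ho
      have he : Even m := by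
        rw [Nat.even_iff]
        rw [Nat.odd_iff] at ho
        omega
      have := hih.1 he
      omega

/-- comparison of a(i,l,n) and a(i+1,l,n) for i ≤ ⌈n/2⌉ - 1
(note ⌈n/2⌉ = (n+1)/2 with natural division). -/
theorem stmt9 (n i : ℕ) (hi : i ≤ (n + 1) / 2 - 1) :
    (∀ l, l ≤ i → a i l n = a (i + 1) l n) ∧
    (Odd i → ∀ l, i < l → l ≤ (n + 1) / 2 → a (i + 1) l n < a i l n) ∧
    (Even i → ∀ l, i < l → l ≤ (n + 1) / 2 → a i l n < a (i + 1) l n) := by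
  refine ⟨?_, ?_, ?_⟩
  · intro l hl
    rcases Nat.eq_zero_or_pos n with rfl | hn
    · have hi0 : i = 0 := by omega
      have hl0 : l = 0 := by omega
      subst hi0; subst hl0
      rw [a_zero_l, a_zero_l]
    · exact part1 l i n hl (by omega)
  · intro ho l h1 h2
    have hn : 1 ≤ n := by
      by_contra h
      push_neg at h
      interval_cases n <;> omega
    exact (part2 i n l (by omega) h1 (by omega)).2 ho
  · intro he l h1 h2
    have hn : 1 ≤ n := by
      by_contra h
      push_neg at h
      interval_cases n <;> omega
    exact (part2 i n l (by omega) h1 (by omega)).1 he
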